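/- Let F be a graph CNF (clauses are exactly the edges of a graph without isolated vertices, viewed as positive 2-clauses). Then every OBDD computing the Boolean function of F has at least 2^{sfw(F)} nodes, where sfw(F) is the subfunction width of F. -/

import Mathlib

abbrev Var := ℕ
abbrev Lit := Var × Bool
abbrev Clause := Finset Lit
abbrev CNF := Finset Clause

def varsClause (c : Clause) : Finset Var := c.image Prod.fst
def varsCNF (F : CNF) : Finset Var := F.sup varsClause
def sizeCNF (F : CNF) : ℕ := ∑ c ∈ F, c.card

def satClauseOn (X : Finset Var) (f : Var → Bool) (c : Clause) : Prop :=
  ∃ l ∈ c, l.1 ∈ X ∧ f l.1 = l.2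

instance (X : Finset Var) (f : Var → Bool) : DecidablePred (satClauseOn X f) := fun c => by
  unfold satClauseOn; infer_instance

def restrict (F : CNF) (X : Finset Var) (f : Var → Bool) : CNF :=
  (F.filter (fun c => ¬ satClauseOn X f c)).image (fun c => c.filter (fun l => l.1 ∉ X))

def st (F : CNF) (X : Finset Var) : Set CNF := { G | ∃ f : Var → Bool, G = restrict F X f }

noncomputable def stw (F : CNF) (σ : List Var) : ℕ :=
  (Finset.Icc 1 σ.length).sup fun i => (st F ((σ.take i).toFinset)).ncard

def satCNF (F : CNF) (f : Var → Bool) : Prop := ∀ c ∈ F, ∃ l ∈ c, f l.1 = l.2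

structure OBDD (σ : List Var) where
  size : ℕ
  label : Fin size → (Fin σ.length) ⊕ Bool
  succ : Fin size → Bool → Fin size
  source : Fin size
  ordered : ∀ v i, label v = Sum.inl i → ∀ b j, label (succ v b) = Sum.inl j → i < j

def OBDD.evalAux {σ : List Var} (D : OBDD σ) (f : Var → Bool) : ℕ → Fin D.size → Bool
  | 0, v => match D.label v with | .inr b => b | .inl _ => false
  | n+1, v => match D.label v with
    | .inr b => b
    | .inl i => D.evalAux f n (D.succ v (f (σ.get i)))

def OBDD.eval {σ : List Var} (D : OBDD σ) (f : Var → Bool) : Bool :=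
  D.evalAux f (σ.length + 1) D.source

def OBDD.computes {σ : List Var} (D : OBDD σ) (F : CNF) : Prop :=
  ∀ f : Var → Bool, D.eval f = true ↔ satCNF F f

/-- F is a graph CNF: its clauses are exactly positive 2-clauses (edges of a graph). -/
def GraphCNF (F : CNF) : Prop :=
  ∀ c ∈ F, ∃ u v : Var, u ≠ v ∧ c = ({(u, true), (v, true)} : Clause)

/-- A set of e clauses of the graph CNF F is subfunction productive relative to the
prefix-variable set P: clauses cᵢ = {aᵢ,uᵢ} with aᵢ ∈ P, uᵢ ∉ P, and for i ≠ j no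
clause of F equals {aᵢ,aⱼ} or {aᵢ,uⱼ}. -/
def SubfunProductive (F : CNF) (P : Finset Var) (e : ℕ) : Prop :=
  ∃ a u : Fin e → Var,
    Function.Injective a ∧ Function.Injective u ∧
    (∀ i, a i ∈ P) ∧ (∀ i, u i ∈ varsCNF F \ P) ∧
    (∀ i, ({(a i, true), (u i, true)} : Clause) ∈ F) ∧
    (∀ i j, i ≠ j →
      ({(a i, true), (a j, true)} : Clause) ∉ F ∧
      ({(a i, true), (u j, true)} : Clause) ∉ F)

/-- The subfunction width of F: minimum over orderings σ of var(F) of the maximum over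
prefixes π of σ of the largest size of a subfunction productive set. -/
noncomputable def sfw (F : CNF) : ℕ :=
  sInf { m | ∃ σ : List Var, σ.Nodup ∧ σ.toFinset = varsCNF F ∧
    m = (Finset.Icc 1 σ.length).sup
      (fun i => sSup { e | SubfunProductive F ((σ.take i).toFinset) e }) }



/-! ### Auxiliary development for the OBDD lower bound -/

namespace OBDDLB

variable {σ : List Var} (D : OBDD σ)

/-- Rank of a node: upper bound on the remaining evaluation depth. -/
def rank (v : Fin D.size) : ℕ :=
  match D.label v with
  | .inl k => σ.length - k.val
  | .inr _ => 0

lemma rank_eq_inl {v : Fin D.size} {k : Fin σ.length} (h : D.label v = .inl k) :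
    rank D v = σ.length - k.val := by
  unfold rank; rw [h]

lemma rank_eq_inr {v : Fin D.size} {b : Bool} (h : D.label v = .inr b) :
    rank D v = 0 := by
  unfold rank; rw [h]

lemma rank_le (v : Fin D.size) : rank D v ≤ σ.length := by
  rcases h : D.label v with k | b
  · rw [rank_eq_inl D h]; omega
  · rw [rank_eq_inr D h]; omega

lemma rank_succ_lt {v : Fin D.size} {k : Fin σ.length} (h : D.label v = .inl k)
    (b : Bool) : rank D (D.succ v b) < rank D v := by
  have hk : k.val < σ.length := k.isLt
  rw [rank_eq_inl D h]
  rcases h2 : D.label (D.succ v b) with j | c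
  · have hij : k.val < j.val := D.ordered v k h b j h2
    have hj : j.val < σ.length := j.isLt
    rw [rank_eq_inl D h2]
    omega
  · rw [rank_eq_inr D h2]
    omega

lemma evalAux_succ_eq (f : Var → Bool) :
    ∀ (n : ℕ) (v : Fin D.size), rank D v ≤ n →
      D.evalAux f n v = D.evalAux f (n + 1) v := by
  intro n
  induction n with
  | zero =>
    intro v hv
    rcases h : D.label v with k | b
    · exfalso
      have hk : k.val < σ.length := k.isLt
      rw [rank_eq_inl D h] at hv
      omega
    · simp [OBDD.evalAux, h]
  | succ n ih =>
    intro v hv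
    rcases h : D.label v with k | b
    · have hlt := rank_succ_lt D h (f (σ.get k))
      have : rank D (D.succ v (f (σ.get k))) ≤ n := by omega
      simp only [OBDD.evalAux, h]
      exact ih _ this
    · simp [OBDD.evalAux, h]

lemma evalAux_mono (f : Var → Bool) {n m : ℕ} (v : Fin D.size)
    (hn : rank D v ≤ n) (hnm : n ≤ m) :
    D.evalAux f n v = D.evalAux f m v := by
  induction m, hnm using Nat.le_induction with
  | base => rfl
  | succ m hm ih => rw [ih, evalAux_succ_eq D f m v (le_trans hn hm)]

/-- Follow the OBDD from a node, branching on `f`, while the label index is `< i`. -/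
def reach (f : Var → Bool) (i : ℕ) : ℕ → Fin D.size → Fin D.size
  | 0, v => v
  | n+1, v =>
    match D.label v with
    | .inr _ => v
    | .inl k => if k.val < i then reach f i n (D.succ v (f (σ.get k))) else v

lemma rank_reach_le (f : Var → Bool) (i : ℕ) :
    ∀ (n : ℕ) (v : Fin D.size), rank D (reach D f i n v) ≤ rank D v := by
  intro n
  induction n with
  | zero => intro v; simp [reach]
  | succ n ih =>
    intro v
    rcases h : D.label v with k | b
    · by_cases hk : k.val < i
      · simp only [reach, h, if_pos hk]
        calc rank D (reach D f i n (D.succ v (f (σ.get k)))) ≤ rank D (D.succ v (f (σ.get k))) := ih _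
          _ ≤ rank D v := le_of_lt (rank_succ_lt D h _)
      · simp [reach, h, hk]
    · simp [reach, h]

lemma evalAux_reach (f : Var → Bool) (i : ℕ) :
    ∀ (n : ℕ) (v : Fin D.size), rank D v ≤ n →
      D.evalAux f n v = D.evalAux f n (reach D f i n v) := by
  intro n
  induction n with
  | zero => intro v hv; simp [reach]
  | succ n ih =>
    intro v hv
    rcases h : D.label v with k | b
    · by_cases hk : k.val < i
      · have hlt := rank_succ_lt D h (f (σ.get k))
        have hw : rank D (D.succ v (f (σ.get k))) ≤ n := by omega
        simp only [reach, h, if_pos hk]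
        rw [show D.evalAux f (n+1) v = D.evalAux f n (D.succ v (f (σ.get k))) by
              simp [OBDD.evalAux, h]]
        rw [ih _ hw]
        exact evalAux_succ_eq D f n _ (le_trans (rank_reach_le D f i n _) hw)
      · simp [reach, h, hk]
    · simp [reach, h]

lemma reach_congr {f f' : Var → Bool} {i : ℕ}
    (hff : ∀ k : Fin σ.length, k.val < i → f (σ.get k) = f' (σ.get k)) :
    ∀ (n : ℕ) (v : Fin D.size), reach D f i n v = reach D f' i n v := by
  intro n
  induction n with
  | zero => intro v; simp [reach]
  | succ n ih =>
    intro v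
    rcases h : D.label v with k | b
    · by_cases hk : k.val < i
      · simp only [reach, h, if_pos hk, hff k hk, ih]
      · simp [reach, h, hk]
    · simp [reach, h]

lemma reach_label (f : Var → Bool) (i : ℕ) :
    ∀ (n : ℕ) (v : Fin D.size), rank D v ≤ n →
      ∀ k : Fin σ.length, D.label (reach D f i n v) = .inl k → i ≤ k.val := by
  intro n
  induction n with
  | zero =>
    intro v hv k hk
    rcases h : D.label v with k0 | b
    · exfalso
      have : k0.val < σ.length := k0.isLt
      rw [rank_eq_inl D h] at hv; omega
    · simp only [reach] at hk
      rw [h] at hk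
      exact absurd hk (by simp)
  | succ n ih =>
    intro v hv k hk
    rcases h : D.label v with k0 | b
    · by_cases hk0 : k0.val < i
      · have hlt := rank_succ_lt D h (f (σ.get k0))
        have hw : rank D (D.succ v (f (σ.get k0))) ≤ n := by omega
        simp only [reach, h, if_pos hk0] at hk
        exact ih _ hw k hk
      · simp only [reach, h, if_neg hk0] at hk
        have : k0 = k := by injection hk
        omega
    · simp only [reach, h] at hk
      exact absurd hk (by simp)

lemma evalAux_agree {f f' : Var → Bool} {i : ℕ}
    (hff : ∀ k : Fin σ.length, i ≤ k.val → f (σ.get k) = f' (σ.get k)) :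
    ∀ (n : ℕ) (v : Fin D.size),
      (∀ k : Fin σ.length, D.label v = .inl k → i ≤ k.val) →
      D.evalAux f n v = D.evalAux f' n v := by
  intro n
  induction n with
  | zero => intro v _; rfl
  | succ n ih =>
    intro v hv
    rcases h : D.label v with k | b
    · have hik : i ≤ k.val := hv k h
      have heq : f (σ.get k) = f' (σ.get k) := hff k hik
      simp only [OBDD.evalAux, h, heq]
      apply ih
      intro j hj
      have := D.ordered v k h (f' (σ.get k)) j hj
      omega
    · simp [OBDD.evalAux, h]

/-- Combine a prefix assignment (given by `α` on the `a`-variables, `true`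
on the rest of the prefix) with a suffix assignment `g`. -/
def comb {e : ℕ} (P : Finset Var) (a : Fin e → Var) (α : Fin e → Bool)
    (g : Var → Bool) (v : Var) : Bool :=
  if v ∈ P then decide (∀ j, a j = v → α j = true) else g v

lemma comb_a {e : ℕ} {P : Finset Var} {a : Fin e → Var}
    (hainj : Function.Injective a) (haP : ∀ i, a i ∈ P)
    (α : Fin e → Bool) (g : Var → Bool) (j : Fin e) :
    comb P a α g (a j) = α j := by
  unfold comb
  rw [if_pos (haP j)]
  rcases hj : α j with _ | _
  · apply decide_eq_false
    intro hall
    have := hall j rfl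
    rw [hj] at this
    exact absurd this (by simp)
  · apply decide_eq_true
    intro j' hj'
    have : j' = j := hainj hj'
    rw [this, hj]

lemma comb_not_mem {e : ℕ} {P : Finset Var} {a : Fin e → Var}
    (α : Fin e → Bool) (g : Var → Bool) {v : Var} (hv : v ∉ P) :
    comb P a α g v = g v := by
  unfold comb
  rw [if_neg hv]

lemma comb_eq_false {e : ℕ} {P : Finset Var} {a : Fin e → Var}
    {α : Fin e → Bool} {g : Var → Bool} {v : Var}
    (h : comb P a α g v = false) :
    (∃ j, a j = v ∧ α j = false) ∨ (v ∉ P ∧ g v = false) := by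
  unfold comb at h
  by_cases hv : v ∈ P
  · rw [if_pos hv] at h
    left
    have := of_decide_eq_false h
    push_neg at this
    obtain ⟨j, hj1, hj2⟩ := this
    exact ⟨j, hj1, by simpa using hj2⟩
  · rw [if_neg hv] at h
    exact Or.inr ⟨hv, h⟩

/-- The distinguishing assignment lemma. -/
lemma distinguish {F : CNF} (hF : GraphCNF F) {P : Finset Var} {e : ℕ}
    {a u : Fin e → Var}
    (hainj : Function.Injective a)
    (haP : ∀ i, a i ∈ P) (huP : ∀ i, u i ∈ varsCNF F \ P)
    (h5 : ∀ i, ({(a i, true), (u i, true)} : Clause) ∈ F)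
    (h6 : ∀ i j, i ≠ j →
      ({(a i, true), (a j, true)} : Clause) ∉ F ∧
      ({(a i, true), (u j, true)} : Clause) ∉ F)
    {α β : Fin e → Bool} {i₀ : Fin e} (hα : α i₀ = false) (hβ : β i₀ = true) :
    ¬ satCNF F (comb P a α (fun v => decide (v ≠ u i₀))) ∧
      satCNF F (comb P a β (fun v => decide (v ≠ u i₀))) := by
  set g₀ : Var → Bool := fun v => decide (v ≠ u i₀) with hg₀
  have hu_notP : u i₀ ∉ P := (Finset.mem_sdiff.1 (huP i₀)).2
  constructor
  · intro hsat
    obtain ⟨l, hl, hfl⟩ := hsat _ (h5 i₀)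
    rcases Finset.mem_insert.1 hl with h | h
    · subst h
      simp only at hfl
      rw [comb_a hainj haP] at hfl
      rw [hα] at hfl
      exact absurd hfl (by simp)
    · have h' : l = (u i₀, true) := by simpa using h
      subst h'
      simp only at hfl
      rw [comb_not_mem _ _ hu_notP] at hfl
      simp [hg₀] at hfl
  · intro c hc
    obtain ⟨x, y, hxy, hcxy⟩ := hF c hc
    subst hcxy
    suffices hor : comb P a β g₀ x = true ∨ comb P a β g₀ y = true by
      rcases hor with h | h
      · exact ⟨(x, true), Finset.mem_insert_self _ _, h⟩
      · exact ⟨(y, true), by simp, h⟩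
    by_contra hcon
    push_neg at hcon
    obtain ⟨hx, hy⟩ := hcon
    simp only [ne_eq, Bool.not_eq_true] at hx hy
    have hx' := comb_eq_false hx
    have hy' := comb_eq_false hy
    rcases hx' with ⟨j, hja, hjβ⟩ | ⟨hxP, hxg⟩
    · rcases hy' with ⟨k, hka, hkβ⟩ | ⟨hyP, hyg⟩
      · have hjk : j ≠ k := by
          intro h; rw [h, hka] at hja; exact hxy hja.symm
        exact (h6 j k hjk).1 (by rw [hja, hka]; exact hc)
      · have hyu : y = u i₀ := by
          simp only [hg₀, decide_eq_false_iff_not, not_not] at hyg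
          exact hyg
        have hji : j ≠ i₀ := by
          intro h; rw [h, hβ] at hjβ; exact absurd hjβ (by simp)
        exact (h6 j i₀ hji).2 (by rw [hja, ← hyu]; exact hc)
    · have hxu : x = u i₀ := by
        simp only [hg₀, decide_eq_false_iff_not, not_not] at hxg
        exact hxg
      rcases hy' with ⟨k, hka, hkβ⟩ | ⟨hyP, hyg⟩
      · have hki : k ≠ i₀ := by
          intro h; rw [h, hβ] at hkβ; exact absurd hkβ (by simp)
        refine (h6 k i₀ hki).2 ?_
        rw [hka, ← hxu, Finset.pair_comm]
        exact hc
      · have hyu : y = u i₀ := by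
          simp only [hg₀, decide_eq_false_iff_not, not_not] at hyg
          exact hyg
        exact hxy (hxu.trans hyu.symm)

lemma mem_take_toFinset {σ : List Var} {i : ℕ} (k : Fin σ.length) (hk : k.val < i) :
    σ.get k ∈ (σ.take i).toFinset := by
  rw [List.mem_toFinset]
  have hlen : k.val < (σ.take i).length := by simp [List.length_take]; omega
  have heq : (σ.take i)[k.val] = σ[k.val] := List.getElem_take (xs := σ)
  rw [List.get_eq_getElem, ← heq]
  exact List.getElem_mem hlen

lemma not_mem_take_toFinset {σ : List Var} (hnd : σ.Nodup) {i : ℕ}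
    (k : Fin σ.length) (hk : i ≤ k.val) :
    σ.get k ∉ (σ.take i).toFinset := by
  rw [List.mem_toFinset]
  intro hmem
  obtain ⟨j, hj, hjeq⟩ := List.getElem_of_mem hmem
  have hjlen : j < σ.length := by
    have := hj; simp [List.length_take] at this; omega
  have hji : j < i := by
    have := hj; simp [List.length_take] at this; omega
  have : σ[j] = σ[k.val] := by
    rw [← List.getElem_take (xs := σ) (j := i) (h := hj), hjeq]; rfl
  have hjk : j = k.val := (List.Nodup.getElem_inj_iff hnd).1 this
  omega

/-- Core lemma: a subfunction-productive set of size e forces ≥ 2^e nodes. -/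
lemma core {F : CNF} (hF : GraphCNF F) {σ : List Var} (hnd : σ.Nodup)
    (D : OBDD σ) (hD : D.computes F) (i : ℕ) {e : ℕ}
    (hprod : SubfunProductive F ((σ.take i).toFinset) e) :
    2 ^ e ≤ D.size := by
  obtain ⟨a, u, hainj, huinj, haP, huP, h5, h6⟩ := hprod
  set P : Finset Var := (σ.take i).toFinset with hP
  set fuel : ℕ := σ.length + 1 with hfuel
  set N : (Fin e → Bool) → Fin D.size := fun α =>
    reach D (comb P a α (fun _ => true)) i fuel D.source with hN
  have hranksrc : rank D D.source ≤ fuel := le_trans (rank_le D _) (by omega)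
  -- reach with any suffix assignment equals N α
  have hreach : ∀ (α : Fin e → Bool) (g : Var → Bool),
      reach D (comb P a α g) i fuel D.source = N α := by
    intro α g
    apply reach_congr
    intro k hk
    have hmem : σ.get k ∈ P := mem_take_toFinset k hk
    unfold comb
    rw [if_pos hmem, if_pos hmem]
  -- label of N α is ≥ i
  have hlabelN : ∀ (α : Fin e → Bool) (k : Fin σ.length),
      D.label (N α) = .inl k → i ≤ k.val := by
    intro α k hk
    exact reach_label D _ i fuel D.source hranksrc k hk
  have hinj : Function.Injective N := by
    intro α β hNe
    by_contra hne
    obtain ⟨i₀, hi₀⟩ := Function.ne_iff.1 hne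
    -- evaluations agree for any common suffix assignment
    have hevals : ∀ g : Var → Bool,
        D.eval (comb P a α g) = D.eval (comb P a β g) := by
      intro g
      unfold OBDD.eval
      rw [evalAux_reach D _ i fuel D.source hranksrc,
          evalAux_reach D _ i fuel D.source hranksrc]
      rw [hreach α g, hreach β g, hNe]
      apply evalAux_agree
      · intro k hk
        have hmem : σ.get k ∉ P := not_mem_take_toFinset hnd k hk
        unfold comb
        rw [if_neg hmem, if_neg hmem]
      · intro k hk
        exact hlabelN β k hk
    have hsats : ∀ g : Var → Bool,
        satCNF F (comb P a α g) ↔ satCNF F (comb P a β g) := by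
      intro g
      rw [← hD, ← hD, hevals]
    rcases hαv : α i₀ with _ | _
    · have hβv : β i₀ = true := by
        rcases h : β i₀ with _ | _
        · rw [hαv, h] at hi₀; exact absurd rfl hi₀
        · rfl
      obtain ⟨hns, hs⟩ := distinguish hF hainj haP huP h5 h6 hαv hβv
      exact hns ((hsats _).2 hs)
    · have hβv : β i₀ = false := by
        rcases h : β i₀ with _ | _
        · rfl
        · rw [hαv, h] at hi₀; exact absurd rfl hi₀
      obtain ⟨hns, hs⟩ := distinguish hF hainj haP huP h5 h6 hβv hαv
      exact hns ((hsats _).1 hs)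
  calc 2 ^ e = Fintype.card (Fin e → Bool) := by simp
    _ ≤ Fintype.card (Fin D.size) := Fintype.card_le_of_injective N hinj
    _ = D.size := Fintype.card_fin _

lemma prod_zero (F : CNF) (P : Finset Var) : SubfunProductive F P 0 := by
  exact ⟨Fin.elim0, Fin.elim0, fun x => x.elim0, fun x => x.elim0,
    fun x => x.elim0, fun x => x.elim0, fun x => x.elim0, fun x => x.elim0⟩

lemma prod_bdd (F : CNF) (P : Finset Var) {e : ℕ}
    (h : SubfunProductive F P e) : e ≤ P.card := by
  obtain ⟨a, u, hainj, _, haP, _⟩ := h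
  have : Fintype.card (Fin e) ≤ Fintype.card P := by
    apply Fintype.card_le_of_injective (fun j => (⟨a j, haP j⟩ : P))
    intro x y hxy
    exact hainj (by simpa using hxy)
  simpa using this

end OBDDLB

/-- every OBDD computing a graph CNF F has at least 2^(sfw F) nodes. -/
theorem obdd_lower_bound_sfw (F : CNF) (hF : GraphCNF F)
    (σ : List Var) (hnd : σ.Nodup) (hv : σ.toFinset = varsCNF F)
    (D : OBDD σ) (hD : D.computes F) :
    2 ^ sfw F ≤ D.size := by
  -- sfw F is at most the value attained by σ
  have hle : sfw F ≤ (Finset.Icc 1 σ.length).sup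
      (fun i => sSup { e | SubfunProductive F ((σ.take i).toFinset) e }) := by
    apply Nat.sInf_le
    exact ⟨σ, hnd, hv, rfl⟩
  have hpos : 1 ≤ D.size := D.source.pos
  have hmain : 2 ^ ((Finset.Icc 1 σ.length).sup
      (fun i => sSup { e | SubfunProductive F ((σ.take i).toFinset) e })) ≤ D.size := by
    rcases Finset.eq_empty_or_nonempty (Finset.Icc 1 σ.length) with hemp | hne
    · rw [hemp, Finset.sup_empty]
      simpa using hpos
    · obtain ⟨i, hi, heq⟩ := Finset.exists_mem_eq_sup _ hne
        (fun i => sSup { e | SubfunProductive F ((σ.take i).toFinset) e })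
    -- the sSup is attained
      rw [heq]
      have hnonempty : { e | SubfunProductive F ((σ.take i).toFinset) e }.Nonempty :=
        ⟨0, OBDDLB.prod_zero F _⟩
      have hbdd : BddAbove { e | SubfunProductive F ((σ.take i).toFinset) e } :=
        ⟨((σ.take i).toFinset).card, fun e he => OBDDLB.prod_bdd F _ he⟩
      have hmem := Nat.sSup_mem hnonempty hbdd
      exact OBDDLB.core hF hnd D hD i hmem
  calc 2 ^ sfw F ≤ 2 ^ ((Finset.Icc 1 σ.length).sup
        (fun i => sSup { e | SubfunProductive F ((σ.take i).toFinset) e })) :=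
        Nat.pow_le_pow_right (by norm_num) hle
    _ ≤ D.size := hmain
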